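/- arXiv:1504.06542 — 2 statements merged into one kernel-verified Lean document; each statement's English description precedes it below -/
import Mathlib

section
/- Let D be a growth diagram whose vertices lie on a rectangle [a,b] × [c,d] in the directed grid graph. Given a labeling of the vertices along a single monotone lattice path from the corner (a,b) to the corner (c,d) by partitions satisfying the growth condition (each edge adds a single box), there is a unique extension of this labeling to a growth diagram on the entire rectangle. -/
/-- `β` is obtained from `α` by adding a single box. -/
def OneBox (α β : YoungDiagram) : Prop := α ≤ β ∧ β.cells.card = α.cells.card + 1

/-- Two cells are adjacent if they share an edge. -/
def AdjCell (c d : ℕ × ℕ) : Prop :=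
  (c.1 = d.1 ∧ (c.2 + 1 = d.2 ∨ d.2 + 1 = c.2)) ∨
  (c.2 = d.2 ∧ (c.1 + 1 = d.1 ∨ d.1 + 1 = c.1))

/-- The local recurrence condition of growth diagrams for a square with corners
`γ` (bottom left), `α` (top left), `δ` (bottom right), `β` (top right): if the two
boxes of `β/γ` are nonadjacent, then `α` and `δ` are the two distinct intermediate
partitions between `γ` and `β`. -/
def GrowthSq (γ α δ β : YoungDiagram) : Prop :=
  (∃ c ∈ β.cells, ∃ d ∈ β.cells, c ∉ γ.cells ∧ d ∉ γ.cells ∧ c ≠ d ∧ ¬ AdjCell c d) →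
    α ≠ δ

namespace GDAux

lemma oneBox_exists {γ α : YoungDiagram} (h : OneBox γ α) :
    ∃ x, x ∉ γ.cells ∧ α.cells = insert x γ.cells := by
  obtain ⟨x, hx, hins⟩ := Finset.exists_eq_insert_iff.mpr
    ⟨YoungDiagram.cells_subset_iff.mpr h.1, h.2.symm⟩
  exact ⟨x, hx, hins.symm⟩

lemma adjCell_symm {x y : ℕ × ℕ} (h : AdjCell x y) : AdjCell y x := by
  rcases h with ⟨h1, h2⟩ | ⟨h1, h2⟩
  · exact Or.inl ⟨h1.symm, h2.symm⟩
  · exact Or.inr ⟨h1.symm, h2.symm⟩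

lemma adj_le {x y : ℕ × ℕ} (h : AdjCell x y) : x ≤ y ∨ y ≤ x := by
  rcases h with ⟨h1, h2 | h2⟩ | ⟨h1, h2 | h2⟩
  · exact Or.inl ⟨le_of_eq h1, by omega⟩
  · exact Or.inr ⟨le_of_eq h1.symm, by omega⟩
  · exact Or.inl ⟨by omega, le_of_eq h1⟩
  · exact Or.inr ⟨by omega, le_of_eq h1.symm⟩

lemma key_not_le {γ β : YoungDiagram} {x y : ℕ × ℕ}
    (hx : x ∉ γ.cells) (hxy : x ≠ y)
    (hβ : β.cells = insert y (insert x γ.cells))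
    (hnadj : ¬ AdjCell x y) : ¬ x ≤ y := by
  intro hle
  obtain ⟨hle1, hle2⟩ := hle
  have hyβ : y ∈ β.cells := by rw [hβ]; simp
  have hmain : ∀ cc : ℕ × ℕ, cc ≤ y → x ≤ cc → cc ≠ x → cc ≠ y → False := by
    intro cc hccy hxcc hne1 hne2
    have : cc ∈ β.cells := β.isLowerSet hccy hyβ
    rw [hβ] at this
    simp only [Finset.mem_insert] at this
    rcases this with h | h | h
    · exact hne2 h
    · exact hne1 h
    · exact hx (γ.isLowerSet hxcc h)
  rcases Nat.lt_or_ge x.2 y.2 with h2 | h2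
  · refine hmain (x.1, x.2 + 1) ⟨hle1, h2⟩ ⟨le_refl _, by omega⟩ ?_ ?_
    · intro h; have := congrArg Prod.snd h; simp at this
    · intro h
      have h1 := congrArg Prod.fst h
      have h2' := congrArg Prod.snd h
      simp at h1 h2'
      exact hnadj (Or.inl ⟨h1, Or.inl h2'⟩)
  · -- x.2 = y.2, so x.1 < y.1
    have hx2 : x.2 = y.2 := le_antisymm hle2 h2
    have hx1 : x.1 < y.1 := by
      rcases Nat.lt_or_ge x.1 y.1 with h | h
      · exact h
      · exact absurd (Prod.ext (le_antisymm hle1 h) hx2) hxy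
    refine hmain (x.1 + 1, x.2) ⟨by omega, hle2⟩ ⟨by omega, le_refl _⟩ ?_ ?_
    · intro h; have := congrArg Prod.fst h; simp at this
    · intro h
      have h1 := congrArg Prod.fst h
      have h2' := congrArg Prod.snd h
      simp at h1 h2'
      exact hnadj (Or.inr ⟨h2', Or.inl h1⟩)

lemma insert_not_lower {γ : YoungDiagram} {x y : ℕ × ℕ}
    (hx : x ∉ γ.cells) (hxy : x ≠ y) (hle : x ≤ y) (δ : YoungDiagram)
    (hδ : δ.cells = insert y γ.cells) : False := by
  have hyδ : y ∈ δ.cells := by rw [hδ]; simp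
  have : x ∈ δ.cells := δ.isLowerSet hle hyδ
  rw [hδ] at this
  simp only [Finset.mem_insert] at this
  rcases this with h | h
  · exact hxy h
  · exact hx h

lemma insert_lower {γ β : YoungDiagram} {x y : ℕ × ℕ}
    (hβ : β.cells = insert y (insert x γ.cells))
    (h1 : ¬ x ≤ y) : IsLowerSet (↑(insert y γ.cells) : Set (ℕ × ℕ)) := by
  intro u v huv hv
  simp only [Finset.coe_insert, Set.mem_insert_iff, Finset.mem_coe] at hv ⊢
  rcases hv with rfl | hv
  · have hyβ : u ∈ β.cells := by rw [hβ]; simp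
    have : v ∈ β.cells := β.isLowerSet huv hyβ
    rw [hβ] at this
    simp only [Finset.mem_insert] at this
    rcases this with h | h | h
    · exact Or.inl h
    · exact absurd (h ▸ huv) h1
    · exact Or.inr h
  · exact Or.inr (γ.isLowerSet huv hv)

theorem square_complete {γ α β : YoungDiagram} (h1 : OneBox γ α) (h2 : OneBox α β) :
    ∃! δ, OneBox γ δ ∧ OneBox δ β ∧ GrowthSq γ α δ β := by
  obtain ⟨x, hx, hα⟩ := oneBox_exists h1
  obtain ⟨y, hy, hβ'⟩ := oneBox_exists h2
  have hβ : β.cells = insert y (insert x γ.cells) := by rw [hβ', hα]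
  have hxy : x ≠ y := fun h => hy (by rw [hα, ← h]; simp)
  have hyγ : y ∉ γ.cells := fun h => hy (by rw [hα]; simp [h])
  have hcard : β.cells.card = γ.cells.card + 2 := by rw [h2.2, h1.2]
  have hxβ : x ∈ β.cells := by rw [hβ]; simp
  have hyβ : y ∈ β.cells := by rw [hβ]; simp
  -- any candidate δ has cells insert x γ or insert y γ
  have hcand : ∀ δ : YoungDiagram, OneBox γ δ → OneBox δ β →
      δ.cells = insert x γ.cells ∨ δ.cells = insert y γ.cells := by
    intro δ hδ1 hδ2
    obtain ⟨z, hz, hδ⟩ := oneBox_exists hδ1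
    have hzβ : z ∈ β.cells := YoungDiagram.cells_subset_iff.mpr hδ2.1 (by rw [hδ]; simp)
    rw [hβ] at hzβ
    simp only [Finset.mem_insert] at hzβ
    rcases hzβ with rfl | rfl | h
    · exact Or.inr (by rw [hδ])
    · exact Or.inl (by rw [hδ])
    · exact absurd h hz
  have hnotyx : ¬ y ≤ x := by
    intro h
    have : y ∈ (↑α.cells : Set (ℕ × ℕ)) := α.isLowerSet h (by rw [hα]; simp)
    exact hy (Finset.mem_coe.mp this)
  by_cases hcomp : x ≤ y
  · -- comparable case: the two boxes are adjacent, δ = α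
    refine ⟨α, ⟨h1, h2, ?_⟩, ?_⟩
    · rintro ⟨cc, hc, dd, hd, hcg, hdg, hne, hnadj⟩
      exfalso
      rw [hβ] at hc hd
      simp only [Finset.mem_insert] at hc hd
      have hcc : cc = x ∨ cc = y := by tauto
      have hdd : dd = x ∨ dd = y := by tauto
      rcases hcc with hc' | hc' <;> rcases hdd with hd' | hd'
      · exact hne (hc'.trans hd'.symm)
      · rw [hc', hd'] at hnadj
        exact key_not_le hx hxy hβ hnadj hcomp
      · rw [hc', hd'] at hnadj
        exact key_not_le hx hxy hβ (fun h => hnadj (adjCell_symm h)) hcomp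
      · exact hne (hc'.trans hd'.symm)
    · rintro δ ⟨hδ1, hδ2, _⟩
      rcases hcand δ hδ1 hδ2 with h | h
      · exact YoungDiagram.ext (by rw [h, hα])
      · exact absurd (insert_not_lower hx hxy hcomp δ h) (fun f => f)
  · -- incomparable case
    have hnadj : ¬ AdjCell x y := fun h => (adj_le h).elim hcomp hnotyx
    refine ⟨⟨insert y γ.cells, insert_lower hβ hcomp⟩, ⟨⟨?_, ?_⟩, ⟨?_, ?_⟩, ?_⟩, ?_⟩
    · exact fun u hu => Finset.mem_insert_of_mem hu
    · simp [Finset.card_insert_of_notMem hyγ]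
    · intro u hu
      simp only [YoungDiagram.mem_cells, YoungDiagram.mem_mk, Finset.mem_insert] at hu ⊢
      rw [show (u ∈ β) = (u ∈ β.cells) from rfl, hβ]
      simp only [Finset.mem_insert]
      tauto
    · have : (insert y γ.cells).card = γ.cells.card + 1 := Finset.card_insert_of_notMem hyγ
      simp only [YoungDiagram.cells] at this ⊢
      omega
    · intro _
      intro hcontra
      have hc2 : α.cells = insert y γ.cells := congrArg YoungDiagram.cells hcontra
      have : x ∈ insert y γ.cells := by rw [← hc2, hα]; simp
      simp only [Finset.mem_insert] at this
      tauto
    · rintro δ ⟨hδ1, hδ2, hδ3⟩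
      rcases hcand δ hδ1 hδ2 with h | h
      · exfalso
        refine hδ3 ⟨x, hxβ, y, hyβ, hx, hyγ, hxy, hnadj⟩ ?_
        exact YoungDiagram.ext (by rw [h, hα])
      · exact YoungDiagram.ext (by rw [h])


lemma growthSq_swap {γ α δ β : YoungDiagram} (h : GrowthSq γ α δ β) : GrowthSq γ δ α β :=
  fun w => (h w).symm

theorem square_complete' {γ δ β : YoungDiagram} (h1 : OneBox γ δ) (h2 : OneBox δ β) :
    ∃! α, OneBox γ α ∧ OneBox α β ∧ GrowthSq γ α δ β := by
  obtain ⟨α, ⟨ha1, ha2, ha3⟩, hu⟩ := square_complete h1 h2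
  exact ⟨α, ⟨ha1, ha2, growthSq_swap ha3⟩,
    fun z hz => hu z ⟨hz.1, hz.2.1, growthSq_swap hz.2.2⟩⟩

open Classical in
/-- The unique completion of a square: given `γ`, one intermediate `τ`, and `β`,
returns the other intermediate. -/
noncomputable def fill (γ τ β : YoungDiagram) : YoungDiagram :=
  if h : ∃ σ, OneBox γ σ ∧ OneBox σ β ∧ GrowthSq γ τ σ β then h.choose else ⊥

lemma fill_spec {γ τ β : YoungDiagram} (h1 : OneBox γ τ) (h2 : OneBox τ β) :
    OneBox γ (fill γ τ β) ∧ OneBox (fill γ τ β) β ∧ GrowthSq γ τ (fill γ τ β) β := by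
  obtain ⟨σ, hσ, _⟩ := square_complete h1 h2
  rw [fill, dif_pos ⟨σ, hσ⟩]
  exact Exists.choose_spec (⟨σ, hσ⟩ : ∃ σ, OneBox γ σ ∧ OneBox σ β ∧ GrowthSq γ τ σ β)

lemma fill_unique {γ τ β σ : YoungDiagram} (h1 : OneBox γ τ) (h2 : OneBox τ β)
    (hσ : OneBox γ σ ∧ OneBox σ β ∧ GrowthSq γ τ σ β) : σ = fill γ τ β := by
  obtain ⟨σ', hσ', hu⟩ := square_complete h1 h2
  rw [hu σ hσ, hu _ (fill_spec h1 h2)]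


section Global

variable (a b c d : ℤ) (N : ℕ) (q : ℕ → ℤ × ℤ) (ℓ : ℕ → YoungDiagram)

/-- index of the antidiagonal through `(i,j)`. -/
def K (i j : ℤ) : ℕ := (i + j - a - b).toNat

/-- the "big" constant for the lexicographic rank. -/
def Bd : ℕ := (d - b).toNat + (c - a).toNat + 2

/-- The fuel-indexed construction of the growth diagram. -/
noncomputable def F : ℕ → ℤ → ℤ → YoungDiagram
  | 0, _, _ => ⊥
  | (n+1), i, j =>
    if a ≤ i ∧ i ≤ c ∧ b ≤ j ∧ j ≤ d then
      if q (K a b i j) = (i, j) then ℓ (K a b i j)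
      else if (q (K a b i j)).1 < i then
        fill (F n (i-1) j) (F n (i-1) (j+1)) (F n i (j+1))
      else
        fill (F n i (j-1)) (F n (i+1) (j-1)) (F n (i+1) j)
    else ⊥

/-- rank for the recursion. -/
def rank (i j : ℤ) : ℕ :=
  if a ≤ i ∧ i ≤ c ∧ b ≤ j ∧ j ≤ d then
    if q (K a b i j) = (i, j) then 0
    else if (q (K a b i j)).1 < i then
      (i - a).toNat * Bd a b c d + (d - j).toNat + 1
    else
      (c - i).toNat * Bd a b c d + (j - b).toNat + 1
  else 0

variable {a b c d N q}

variable (hq0 : q 0 = (a, b)) (hqN : q N = (c, d)) (hN : (N : ℤ) = (c - a) + (d - b))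
  (hstep : ∀ k, k < N →
      q (k + 1) = ((q k).1 + 1, (q k).2) ∨ q (k + 1) = ((q k).1, (q k).2 + 1))

include hq0 hstep in
lemma qsum : ∀ k, k ≤ N → (q k).1 + (q k).2 = a + b + k := by
  intro k
  induction k with
  | zero => intro _; rw [hq0]; simp
  | succ n ih =>
    intro h
    have h2 := ih (by omega)
    rcases hstep n (by omega) with h' | h' <;> rw [h'] <;> simp <;> push_cast <;> omega

include hstep in
lemma qstep {k : ℕ} (h : k < N) :
    (q k).1 ≤ (q (k+1)).1 ∧ (q (k+1)).1 ≤ (q k).1 + 1 ∧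
    (q k).2 ≤ (q (k+1)).2 ∧ (q (k+1)).2 ≤ (q k).2 + 1 := by
  rcases hstep k h with h' | h' <;> rw [h'] <;> simp <;> omega

include hstep in
lemma qmono : ∀ l, l ≤ N → ∀ k, k ≤ l → (q k).1 ≤ (q l).1 ∧ (q k).2 ≤ (q l).2 := by
  intro l
  induction l with
  | zero =>
    intro _ k hk
    have : k = 0 := by omega
    subst this; exact ⟨le_refl _, le_refl _⟩
  | succ n ih =>
    intro hlN k hkl
    rcases Nat.eq_or_lt_of_le hkl with rfl | h
    · exact ⟨le_refl _, le_refl _⟩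
    · have h1 := ih (by omega) k (by omega)
      have h2 := qstep hstep (show n < N by omega)
      exact ⟨le_trans h1.1 h2.1, le_trans h1.2 h2.2.2.1⟩

include hq0 hqN hstep in
lemma qbnd {k : ℕ} (h : k ≤ N) :
    a ≤ (q k).1 ∧ (q k).1 ≤ c ∧ b ≤ (q k).2 ∧ (q k).2 ≤ d := by
  have h1 := qmono hstep k h 0 (by omega)
  have h2 := qmono hstep N (le_refl _) k h
  rw [hq0] at h1; rw [hqN] at h2
  exact ⟨h1.1, h2.1, h1.2, h2.2⟩

lemma lex_lt1 (u r r' B : ℕ) (h : r' < B) : u * B + r' + 1 < (u + 1) * B + r + 1 := by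
  nlinarith

lemma lex_lt2 (u r r' B : ℕ) (h : r' < r) : u * B + r' + 1 < u * B + r + 1 := by
  have := Nat.add_lt_add_left (show r' + 1 < r + 1 by omega) (u * B)
  simpa [Nat.add_assoc] using this

section InRect

variable {i j : ℤ} (hIR : a ≤ i ∧ i ≤ c ∧ b ≤ j ∧ j ≤ d)

include hIR in
lemma K_cast : (K a b i j : ℤ) = i + j - a - b := by
  unfold K; omega

include hIR hN in
lemma K_le_N : K a b i j ≤ N := by
  unfold K; omega

include hIR hN hq0 hstep in
lemma q_at_K : (q (K a b i j)).1 + (q (K a b i j)).2 = i + j := by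
  have h1 := qsum hq0 hstep (K a b i j) (K_le_N hN hIR)
  have h2 := K_cast hIR
  omega

include hIR hN hq0 hqN hstep in
lemma onPath_iff : q (K a b i j) = (i, j) ↔ (q (K a b i j)).1 = i := by
  constructor
  · intro h; rw [h]
  · intro h
    have h2 := q_at_K hq0 hN hstep hIR
    have : (q (K a b i j)).2 = j := by omega
    exact Prod.ext h this

include hIR in
lemma rank_path_eq (hp : q (K a b i j) = (i, j)) : rank a b c d q i j = 0 := by
  unfold rank; rw [if_pos hIR, if_pos hp]

include hIR in
lemma rank_below_eq (hnp : ¬ q (K a b i j) = (i, j)) (hbl : (q (K a b i j)).1 < i) :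
    rank a b c d q i j = (i - a).toNat * Bd a b c d + (d - j).toNat + 1 := by
  unfold rank; rw [if_pos hIR, if_neg hnp, if_pos hbl]

include hIR in
lemma rank_above_eq (hnp : ¬ q (K a b i j) = (i, j)) (hab : ¬ (q (K a b i j)).1 < i) :
    rank a b c d q i j = (c - i).toNat * Bd a b c d + (j - b).toNat + 1 := by
  unfold rank; rw [if_pos hIR, if_neg hnp, if_neg hab]

include hIR hN hq0 hqN hstep in
lemma belowFacts (hnp : ¬ q (K a b i j) = (i, j)) (hbl : (q (K a b i j)).1 < i) :
    (a ≤ i - 1) ∧ (j + 1 ≤ d) ∧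
    K a b (i-1) j + 1 = K a b i j ∧ K a b (i-1) (j+1) = K a b i j ∧
    K a b i (j+1) = K a b i j + 1 ∧ K a b i j + 1 ≤ N ∧
    (q (K a b (i-1) j)).1 ≤ i - 1 ∧ (q (K a b (i-1) (j+1))).1 ≤ i - 1 ∧
    (q (K a b i (j+1))).1 ≤ i ∧
    rank a b c d q (i-1) j < rank a b c d q i j ∧
    rank a b c d q (i-1) (j+1) < rank a b c d q i j ∧
    rank a b c d q i (j+1) < rank a b c d q i j := by
  obtain ⟨h1, h2, h3, h4⟩ := id hIR
  have hK := K_cast hIR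
  have hKN := K_le_N hN hIR
  have hx := qbnd hq0 hqN hstep hKN
  have hsumK := q_at_K hq0 hN hstep hIR
  have f2 : a ≤ i - 1 := by omega
  have f1 : j + 1 ≤ d := by omega
  have hK1 : 1 ≤ K a b i j := by unfold K at *; omega
  have Kγ : K a b (i-1) j + 1 = K a b i j := by unfold K at *; omega
  have Kα : K a b (i-1) (j+1) = K a b i j := by unfold K at *; omega
  have Kβ : K a b i (j+1) = K a b i j + 1 := by unfold K at *; omega
  have KβN : K a b i j + 1 ≤ N := by unfold K at *; omega
  have xγ : (q (K a b (i-1) j)).1 ≤ i - 1 := by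
    have := qmono hstep (K a b i j) hKN (K a b (i-1) j) (by omega)
    omega
  have xα : (q (K a b (i-1) (j+1))).1 ≤ i - 1 := by rw [Kα]; omega
  have xβ : (q (K a b i (j+1))).1 ≤ i := by
    have := qstep hstep (show K a b i j < N by omega)
    rw [Kβ]; omega
  have hIRγ : a ≤ i - 1 ∧ i - 1 ≤ c ∧ b ≤ j ∧ j ≤ d := ⟨f2, by omega, h3, h4⟩
  have hIRα : a ≤ i - 1 ∧ i - 1 ≤ c ∧ b ≤ j + 1 ∧ j + 1 ≤ d := ⟨f2, by omega, by omega, f1⟩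
  have hIRβ : a ≤ i ∧ i ≤ c ∧ b ≤ j + 1 ∧ j + 1 ≤ d := ⟨h1, h2, by omega, f1⟩
  have hrv := rank_below_eq hIR hnp hbl
  have hBd : (d - j).toNat < Bd a b c d ∧ (d - (j+1)).toNat < Bd a b c d ∧
      (d - (j+1)).toNat < (d - j).toNat ∧ (i - a).toNat = (i - 1 - a).toNat + 1 := by
    unfold Bd; omega
  have rγ : rank a b c d q (i-1) j < rank a b c d q i j := by
    by_cases hp : q (K a b (i-1) j) = (i-1, j)
    · rw [rank_path_eq hIRγ hp, hrv]; exact Nat.succ_pos _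
    · have hblγ : (q (K a b (i-1) j)).1 < i - 1 :=
        lt_of_le_of_ne xγ (fun h => hp ((onPath_iff hq0 hqN hN hstep hIRγ).mpr h))
      rw [rank_below_eq hIRγ hp hblγ, hrv, hBd.2.2.2]
      exact lex_lt1 _ _ _ _ hBd.1
  have rα : rank a b c d q (i-1) (j+1) < rank a b c d q i j := by
    by_cases hp : q (K a b (i-1) (j+1)) = (i-1, j+1)
    · rw [rank_path_eq hIRα hp, hrv]; exact Nat.succ_pos _
    · have hblα : (q (K a b (i-1) (j+1))).1 < i - 1 :=
        lt_of_le_of_ne xα (fun h => hp ((onPath_iff hq0 hqN hN hstep hIRα).mpr h))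
      rw [rank_below_eq hIRα hp hblα, hrv, hBd.2.2.2]
      exact lex_lt1 _ _ _ _ hBd.2.1
  have rβ : rank a b c d q i (j+1) < rank a b c d q i j := by
    by_cases hp : q (K a b i (j+1)) = (i, j+1)
    · rw [rank_path_eq hIRβ hp, hrv]; exact Nat.succ_pos _
    · have hblβ : (q (K a b i (j+1))).1 < i :=
        lt_of_le_of_ne xβ (fun h => hp ((onPath_iff hq0 hqN hN hstep hIRβ).mpr h))
      rw [rank_below_eq hIRβ hp hblβ, hrv]
      exact lex_lt2 _ _ _ _ hBd.2.2.1
  exact ⟨f2, f1, Kγ, Kα, Kβ, KβN, xγ, xα, xβ, rγ, rα, rβ⟩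

include hIR hN hq0 hqN hstep in
lemma aboveFacts (hnp : ¬ q (K a b i j) = (i, j)) (hab : ¬ (q (K a b i j)).1 < i) :
    (i + 1 ≤ c) ∧ (b ≤ j - 1) ∧
    K a b i (j-1) + 1 = K a b i j ∧ K a b (i+1) (j-1) = K a b i j ∧
    K a b (i+1) j = K a b i j + 1 ∧ K a b i j + 1 ≤ N ∧
    ¬ (q (K a b i (j-1))).1 < i ∧ ¬ (q (K a b (i+1) (j-1))).1 < i + 1 ∧
    ¬ (q (K a b (i+1) j)).1 < i + 1 ∧
    rank a b c d q i (j-1) < rank a b c d q i j ∧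
    rank a b c d q (i+1) (j-1) < rank a b c d q i j ∧
    rank a b c d q (i+1) j < rank a b c d q i j := by
  obtain ⟨h1, h2, h3, h4⟩ := id hIR
  have hK := K_cast hIR
  have hKN := K_le_N hN hIR
  have hx := qbnd hq0 hqN hstep hKN
  have hsumK := q_at_K hq0 hN hstep hIR
  have hxgt : i < (q (K a b i j)).1 := by
    rcases lt_or_eq_of_le (not_lt.mp hab) with h | h
    · exact h
    · exact absurd ((onPath_iff hq0 hqN hN hstep ⟨h1,h2,h3,h4⟩).mpr h.symm) hnp
  have f2 : i + 1 ≤ c := by omega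
  have f1 : b ≤ j - 1 := by omega
  have hK1 : 1 ≤ K a b i j := by unfold K at *; omega
  have Kγ : K a b i (j-1) + 1 = K a b i j := by unfold K at *; omega
  have Kδ : K a b (i+1) (j-1) = K a b i j := by unfold K at *; omega
  have Kβ : K a b (i+1) j = K a b i j + 1 := by unfold K at *; omega
  have KβN : K a b i j + 1 ≤ N := by unfold K at *; omega
  have xγ : ¬ (q (K a b i (j-1))).1 < i := by
    have hs := qstep hstep (show K a b i (j-1) < N by omega)
    rw [Kγ] at hs
    omega
  have xδ : ¬ (q (K a b (i+1) (j-1))).1 < i + 1 := by rw [Kδ]; omega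
  have xβ : ¬ (q (K a b (i+1) j)).1 < i + 1 := by
    have := qmono hstep (K a b i j + 1) KβN (K a b i j) (by omega)
    rw [Kβ]; omega
  have hIRγ : a ≤ i ∧ i ≤ c ∧ b ≤ j - 1 ∧ j - 1 ≤ d := ⟨h1, h2, f1, by omega⟩
  have hIRδ : a ≤ i + 1 ∧ i + 1 ≤ c ∧ b ≤ j - 1 ∧ j - 1 ≤ d := ⟨by omega, f2, f1, by omega⟩
  have hIRβ : a ≤ i + 1 ∧ i + 1 ≤ c ∧ b ≤ j ∧ j ≤ d := ⟨by omega, f2, h3, h4⟩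
  have hrv := rank_above_eq hIR hnp hab
  have hBd : (j - b).toNat < Bd a b c d ∧ (j - 1 - b).toNat < Bd a b c d ∧
      (j - 1 - b).toNat < (j - b).toNat ∧ (c - i).toNat = (c - (i+1)).toNat + 1 := by
    unfold Bd; omega
  have rγ : rank a b c d q i (j-1) < rank a b c d q i j := by
    by_cases hp : q (K a b i (j-1)) = (i, j-1)
    · rw [rank_path_eq hIRγ hp, hrv]; exact Nat.succ_pos _
    · rw [rank_above_eq hIRγ hp xγ, hrv]
      exact lex_lt2 _ _ _ _ hBd.2.2.1
  have rδ : rank a b c d q (i+1) (j-1) < rank a b c d q i j := by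
    by_cases hp : q (K a b (i+1) (j-1)) = (i+1, j-1)
    · rw [rank_path_eq hIRδ hp, hrv]; exact Nat.succ_pos _
    · rw [rank_above_eq hIRδ hp xδ, hrv, hBd.2.2.2]
      exact lex_lt1 _ _ _ _ hBd.2.1
  have rβ : rank a b c d q (i+1) j < rank a b c d q i j := by
    by_cases hp : q (K a b (i+1) j) = (i+1, j)
    · rw [rank_path_eq hIRβ hp, hrv]; exact Nat.succ_pos _
    · rw [rank_above_eq hIRβ hp xβ, hrv, hBd.2.2.2]
      exact lex_lt1 _ _ _ _ hBd.1
  exact ⟨f2, f1, Kγ, Kδ, Kβ, KβN, xγ, xδ, xβ, rγ, rδ, rβ⟩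

end InRect

include hq0 hqN hN hstep in
lemma F_stab (ℓ : ℕ → YoungDiagram) :
    ∀ n m m' : ℕ, ∀ i j : ℤ, rank a b c d q i j < n → rank a b c d q i j < m →
      rank a b c d q i j < m' → F a b c d q ℓ m i j = F a b c d q ℓ m' i j := by
  intro n
  induction n with
  | zero => intro m m' i j h; omega
  | succ n ih =>
    intro m m' i j h hm hm'
    obtain ⟨m₀, rfl⟩ : ∃ m₀, m = m₀ + 1 := ⟨m - 1, by omega⟩
    obtain ⟨m₀', rfl⟩ : ∃ m₀', m' = m₀' + 1 := ⟨m' - 1, by omega⟩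
    show F a b c d q ℓ (m₀+1) i j = F a b c d q ℓ (m₀'+1) i j
    rw [F, F]
    by_cases hIR : a ≤ i ∧ i ≤ c ∧ b ≤ j ∧ j ≤ d
    · rw [if_pos hIR, if_pos hIR]
      by_cases hp : q (K a b i j) = (i, j)
      · rw [if_pos hp, if_pos hp]
      · rw [if_neg hp, if_neg hp]
        by_cases hbl : (q (K a b i j)).1 < i
        · rw [if_pos hbl, if_pos hbl]
          obtain ⟨_, _, _, _, _, _, _, _, _, r1, r2, r3⟩ :=
            belowFacts hq0 hqN hN hstep hIR hp hbl
          rw [ih m₀ m₀' (i-1) j (by omega) (by omega) (by omega),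
            ih m₀ m₀' (i-1) (j+1) (by omega) (by omega) (by omega),
            ih m₀ m₀' i (j+1) (by omega) (by omega) (by omega)]
        · rw [if_neg hbl, if_neg hbl]
          obtain ⟨_, _, _, _, _, _, _, _, _, r1, r2, r3⟩ :=
            aboveFacts hq0 hqN hN hstep hIR hp hbl
          rw [ih m₀ m₀' i (j-1) (by omega) (by omega) (by omega),
            ih m₀ m₀' (i+1) (j-1) (by omega) (by omega) (by omega),
            ih m₀ m₀' (i+1) j (by omega) (by omega) (by omega)]
    · rw [if_neg hIR, if_neg hIR]

/-- The extension. -/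
noncomputable def LL (a b c d : ℤ) (q : ℕ → ℤ × ℤ) (ℓ : ℕ → YoungDiagram)
    (i j : ℤ) : YoungDiagram :=
  F a b c d q ℓ (rank a b c d q i j + 1) i j

lemma LL_out {i j : ℤ} (h : ¬ (a ≤ i ∧ i ≤ c ∧ b ≤ j ∧ j ≤ d)) :
    LL a b c d q ℓ i j = ⊥ := by
  unfold LL; rw [F, if_neg h]

lemma LL_path {i j : ℤ} (hIR : a ≤ i ∧ i ≤ c ∧ b ≤ j ∧ j ≤ d)
    (hp : q (K a b i j) = (i, j)) : LL a b c d q ℓ i j = ℓ (K a b i j) := by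
  unfold LL; rw [F, if_pos hIR, if_pos hp]

include hq0 hqN hN hstep in
lemma LL_qk {k : ℕ} (hk : k ≤ N) : LL a b c d q ℓ (q k).1 (q k).2 = ℓ k := by
  have hIR := qbnd hq0 hqN hstep hk
  have hsum := qsum hq0 hstep k hk
  have hK : K a b (q k).1 (q k).2 = k := by unfold K; omega
  rw [LL_path ℓ hIR (by rw [hK]), hK]

include hq0 hqN hN hstep in
lemma LL_below {i j : ℤ} (hIR : a ≤ i ∧ i ≤ c ∧ b ≤ j ∧ j ≤ d)
    (hnp : ¬ q (K a b i j) = (i, j)) (hbl : (q (K a b i j)).1 < i) :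
    LL a b c d q ℓ i j =
      fill (LL a b c d q ℓ (i-1) j) (LL a b c d q ℓ (i-1) (j+1))
        (LL a b c d q ℓ i (j+1)) := by
  obtain ⟨_, _, _, _, _, _, _, _, _, r1, r2, r3⟩ :=
    belowFacts hq0 hqN hN hstep hIR hnp hbl
  unfold LL
  rw [F, if_pos hIR, if_neg hnp, if_pos hbl]
  rw [F_stab hq0 hqN hN hstep ℓ (rank a b c d q i j + 1) (rank a b c d q i j)
      (rank a b c d q (i-1) j + 1) (i-1) j (by omega) (by omega) (by omega),
    F_stab hq0 hqN hN hstep ℓ (rank a b c d q i j + 1) (rank a b c d q i j)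
      (rank a b c d q (i-1) (j+1) + 1) (i-1) (j+1) (by omega) (by omega) (by omega),
    F_stab hq0 hqN hN hstep ℓ (rank a b c d q i j + 1) (rank a b c d q i j)
      (rank a b c d q i (j+1) + 1) i (j+1) (by omega) (by omega) (by omega)]

include hq0 hqN hN hstep in
lemma LL_above {i j : ℤ} (hIR : a ≤ i ∧ i ≤ c ∧ b ≤ j ∧ j ≤ d)
    (hnp : ¬ q (K a b i j) = (i, j)) (hab : ¬ (q (K a b i j)).1 < i) :
    LL a b c d q ℓ i j =
      fill (LL a b c d q ℓ i (j-1)) (LL a b c d q ℓ (i+1) (j-1))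
        (LL a b c d q ℓ (i+1) j) := by
  obtain ⟨_, _, _, _, _, _, _, _, _, r1, r2, r3⟩ :=
    aboveFacts hq0 hqN hN hstep hIR hnp hab
  unfold LL
  rw [F, if_pos hIR, if_neg hnp, if_neg hab]
  rw [F_stab hq0 hqN hN hstep ℓ (rank a b c d q i j + 1) (rank a b c d q i j)
      (rank a b c d q i (j-1) + 1) i (j-1) (by omega) (by omega) (by omega),
    F_stab hq0 hqN hN hstep ℓ (rank a b c d q i j + 1) (rank a b c d q i j)
      (rank a b c d q (i+1) (j-1) + 1) (i+1) (j-1) (by omega) (by omega) (by omega),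
    F_stab hq0 hqN hN hstep ℓ (rank a b c d q i j + 1) (rank a b c d q i j)
      (rank a b c d q (i+1) j + 1) (i+1) j (by omega) (by omega) (by omega)]

variable (hℓ : ∀ k, k < N → OneBox (ℓ k) (ℓ (k + 1)))

include hq0 hqN hN hstep hℓ in
lemma good : ∀ n : ℕ, ∀ i j : ℤ, rank a b c d q i j < n →
    (a ≤ i ∧ i ≤ c ∧ b ≤ j ∧ j ≤ d) → ¬ q (K a b i j) = (i, j) →
    (((q (K a b i j)).1 < i →
      OneBox (LL a b c d q ℓ (i-1) j) (LL a b c d q ℓ i j) ∧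
      OneBox (LL a b c d q ℓ i j) (LL a b c d q ℓ i (j+1)) ∧
      GrowthSq (LL a b c d q ℓ (i-1) j) (LL a b c d q ℓ (i-1) (j+1))
        (LL a b c d q ℓ i j) (LL a b c d q ℓ i (j+1))) ∧
    (¬ (q (K a b i j)).1 < i →
      OneBox (LL a b c d q ℓ i (j-1)) (LL a b c d q ℓ i j) ∧
      OneBox (LL a b c d q ℓ i j) (LL a b c d q ℓ (i+1) j) ∧
      GrowthSq (LL a b c d q ℓ i (j-1)) (LL a b c d q ℓ i j)
        (LL a b c d q ℓ (i+1) (j-1)) (LL a b c d q ℓ (i+1) j))) := by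
  intro n
  induction n with
  | zero => intro i j h; omega
  | succ n ih =>
    intro i j hr hIR hnp
    obtain ⟨h1, h2, h3, h4⟩ := id hIR
    have hK := K_cast hIR
    have hKN := K_le_N hN hIR
    constructor
    · -- below part
      intro hbl
      obtain ⟨f2, f1, Kγ, Kα, Kβ, KβN, xγ, xα, xβ, rγ, rα, rβ⟩ :=
        belowFacts hq0 hqN hN hstep hIR hnp hbl
      have hIRγ : a ≤ i - 1 ∧ i - 1 ≤ c ∧ b ≤ j ∧ j ≤ d := ⟨f2, by omega, h3, h4⟩
      have hIRα : a ≤ i - 1 ∧ i - 1 ≤ c ∧ b ≤ j + 1 ∧ j + 1 ≤ d := ⟨f2, by omega, by omega, f1⟩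
      have hIRβ : a ≤ i ∧ i ≤ c ∧ b ≤ j + 1 ∧ j + 1 ≤ d := ⟨h1, h2, by omega, f1⟩
      -- left edge of the square
      have e1 : OneBox (LL a b c d q ℓ (i-1) j) (LL a b c d q ℓ (i-1) (j+1)) := by
        by_cases hpγ : q (K a b (i-1) j) = (i-1, j)
        · have hxγ : (q (K a b (i-1) j)).1 = i - 1 := by rw [hpγ]
          have hmono := qmono hstep (K a b i j) hKN (K a b (i-1) j) (by omega)
          have hxα : (q (K a b (i-1) (j+1))).1 = i - 1 := by rw [Kα]; omega
          have hpα : q (K a b (i-1) (j+1)) = (i-1, j+1) :=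
            (onPath_iff hq0 hqN hN hstep hIRα).mpr hxα
          rw [LL_path ℓ hIRγ hpγ, LL_path ℓ hIRα hpα,
            show K a b (i-1) (j+1) = K a b (i-1) j + 1 by omega]
          exact hℓ _ (by omega)
        · have hblγ : (q (K a b (i-1) j)).1 < i - 1 :=
            lt_of_le_of_ne xγ (fun h => hpγ ((onPath_iff hq0 hqN hN hstep hIRγ).mpr h))
          exact ((ih (i-1) j (by omega) hIRγ hpγ).1 hblγ).2.1
      -- top edge of the square
      have e2 : OneBox (LL a b c d q ℓ (i-1) (j+1)) (LL a b c d q ℓ i (j+1)) := by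
        by_cases hpβ : q (K a b i (j+1)) = (i, j+1)
        · have hxβ : (q (K a b i (j+1))).1 = i := by rw [hpβ]
          have hs := qstep hstep (show K a b i j < N by omega)
          have hxα : (q (K a b (i-1) (j+1))).1 = i - 1 := by
            rw [Kα]; rw [Kβ] at hxβ; omega
          have hpα : q (K a b (i-1) (j+1)) = (i-1, j+1) :=
            (onPath_iff hq0 hqN hN hstep hIRα).mpr hxα
          rw [LL_path ℓ hIRα hpα, LL_path ℓ hIRβ hpβ,
            show K a b i (j+1) = K a b (i-1) (j+1) + 1 by omega]
          exact hℓ _ (by omega)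
        · have hblβ : (q (K a b i (j+1))).1 < i :=
            lt_of_le_of_ne xβ (fun h => hpβ ((onPath_iff hq0 hqN hN hstep hIRβ).mpr h))
          exact ((ih i (j+1) (by omega) hIRβ hpβ).1 hblβ).1
      have hspec := fill_spec e1 e2
      rw [LL_below ℓ hq0 hqN hN hstep hIR hnp hbl]
      exact hspec
    · -- above part
      intro hab
      obtain ⟨f2, f1, Kγ, Kδ, Kβ, KβN, xγ, xδ, xβ, rγ, rδ, rβ⟩ :=
        aboveFacts hq0 hqN hN hstep hIR hnp hab
      have hIRγ : a ≤ i ∧ i ≤ c ∧ b ≤ j - 1 ∧ j - 1 ≤ d := ⟨h1, h2, f1, by omega⟩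
      have hIRδ : a ≤ i + 1 ∧ i + 1 ≤ c ∧ b ≤ j - 1 ∧ j - 1 ≤ d := ⟨by omega, f2, f1, by omega⟩
      have hIRβ : a ≤ i + 1 ∧ i + 1 ≤ c ∧ b ≤ j ∧ j ≤ d := ⟨by omega, f2, h3, h4⟩
      have hxgt : i < (q (K a b i j)).1 := by
        rcases lt_or_eq_of_le (not_lt.mp hab) with h | h
        · exact h
        · exact absurd ((onPath_iff hq0 hqN hN hstep hIR).mpr h.symm) hnp
      -- bottom edge of the square
      have e1 : OneBox (LL a b c d q ℓ i (j-1)) (LL a b c d q ℓ (i+1) (j-1)) := by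
        by_cases hpγ : q (K a b i (j-1)) = (i, j-1)
        · have hxγ : (q (K a b i (j-1))).1 = i := by rw [hpγ]
          have hs := qstep hstep (show K a b i (j-1) < N by omega)
          have hxδ : (q (K a b (i+1) (j-1))).1 = i + 1 := by
            rw [Kδ]; rw [show K a b i (j-1) + 1 = K a b i j from Kγ] at hs; omega
          have hpδ : q (K a b (i+1) (j-1)) = (i+1, j-1) :=
            (onPath_iff hq0 hqN hN hstep hIRδ).mpr hxδ
          rw [LL_path ℓ hIRγ hpγ, LL_path ℓ hIRδ hpδ,
            show K a b (i+1) (j-1) = K a b i (j-1) + 1 by omega]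
          exact hℓ _ (by omega)
        · exact ((ih i (j-1) (by omega) hIRγ hpγ).2 xγ).2.1
      -- right edge of the square
      have e2 : OneBox (LL a b c d q ℓ (i+1) (j-1)) (LL a b c d q ℓ (i+1) j) := by
        by_cases hpβ : q (K a b (i+1) j) = (i+1, j)
        · have hxβ : (q (K a b (i+1) j)).1 = i + 1 := by rw [hpβ]
          have hmono := qmono hstep (K a b (i+1) j) (by omega) (K a b i j) (by omega)
          have hxδ : (q (K a b (i+1) (j-1))).1 = i + 1 := by rw [Kδ]; omega
          have hpδ : q (K a b (i+1) (j-1)) = (i+1, j-1) :=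
            (onPath_iff hq0 hqN hN hstep hIRδ).mpr hxδ
          rw [LL_path ℓ hIRδ hpδ, LL_path ℓ hIRβ hpβ,
            show K a b (i+1) j = K a b (i+1) (j-1) + 1 by omega]
          exact hℓ _ (by omega)
        · exact ((ih (i+1) j (by omega) hIRβ hpβ).2 xβ).1
      have hspec := fill_spec e1 e2
      rw [LL_above ℓ hq0 hqN hN hstep hIR hnp hab]
      exact ⟨hspec.1, hspec.2.1, growthSq_swap hspec.2.2⟩

include hq0 hqN hN hstep hℓ in
lemma edgeH {i j : ℤ} (h1 : a ≤ i) (h2 : i < c) (h3 : b ≤ j) (h4 : j ≤ d) :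
    OneBox (LL a b c d q ℓ i j) (LL a b c d q ℓ (i+1) j) := by
  have hIR : a ≤ i ∧ i ≤ c ∧ b ≤ j ∧ j ≤ d := ⟨h1, by omega, h3, h4⟩
  have hIR' : a ≤ i + 1 ∧ i + 1 ≤ c ∧ b ≤ j ∧ j ≤ d := ⟨by omega, by omega, h3, h4⟩
  have hK := K_cast hIR
  have hKN' := K_le_N hN hIR'
  have eK : K a b (i+1) j = K a b i j + 1 := by unfold K; omega
  by_cases hp' : q (K a b (i+1) j) = (i+1, j)
  · by_cases hp : q (K a b i j) = (i, j)
    · rw [LL_path ℓ hIR hp, LL_path ℓ hIR' hp', eK]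
      exact hℓ _ (by omega)
    · have hs := qstep hstep (show K a b i j < N by omega)
      have hx' : (q (K a b (i+1) j)).1 = i + 1 := by rw [hp']
      rw [eK] at hx'
      have hxi : (q (K a b i j)).1 ≠ i :=
        fun h => hp ((onPath_iff hq0 hqN hN hstep hIR).mpr h)
      have hxgt : ¬ (q (K a b i j)).1 < i := by omega
      exact ((good ℓ hq0 hqN hN hstep hℓ (rank a b c d q i j + 1) i j (by omega)
        hIR hp).2 hxgt).2.1
  · by_cases hbl' : (q (K a b (i+1) j)).1 < i + 1
    · have hg := ((good ℓ hq0 hqN hN hstep hℓ (rank a b c d q (i+1) j + 1) (i+1) j (by omega)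
        hIR' hp').1 hbl').1
      rw [show (i + 1 - 1 : ℤ) = i from by ring] at hg
      exact hg
    · have hxne : (q (K a b (i+1) j)).1 ≠ i + 1 :=
        fun h => hp' ((onPath_iff hq0 hqN hN hstep hIR').mpr h)
      have hs := qstep hstep (show K a b i j < N by omega)
      rw [← eK] at hs
      have hxgt : ¬ (q (K a b i j)).1 < i := by omega
      have hnp : ¬ q (K a b i j) = (i, j) := by
        intro h
        have : (q (K a b i j)).1 = i := by rw [h]
        omega
      exact ((good ℓ hq0 hqN hN hstep hℓ (rank a b c d q i j + 1) i j (by omega)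
        hIR hnp).2 hxgt).2.1

include hq0 hqN hN hstep hℓ in
lemma edgeV {i j : ℤ} (h1 : a ≤ i) (h2 : i ≤ c) (h3 : b ≤ j) (h4 : j < d) :
    OneBox (LL a b c d q ℓ i j) (LL a b c d q ℓ i (j+1)) := by
  have hIR : a ≤ i ∧ i ≤ c ∧ b ≤ j ∧ j ≤ d := ⟨h1, h2, h3, by omega⟩
  have hIR2 : a ≤ i ∧ i ≤ c ∧ b ≤ j + 1 ∧ j + 1 ≤ d := ⟨h1, h2, by omega, by omega⟩
  have hK := K_cast hIR
  have hKN2 := K_le_N hN hIR2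
  have eK : K a b i (j+1) = K a b i j + 1 := by unfold K; omega
  by_cases hbl : (q (K a b i j)).1 < i
  · have hnp : ¬ q (K a b i j) = (i, j) := by
      intro h
      have : (q (K a b i j)).1 = i := by rw [h]
      omega
    exact ((good ℓ hq0 hqN hN hstep hℓ (rank a b c d q i j + 1) i j (by omega)
      hIR hnp).1 hbl).2.1
  · have hmono := qmono hstep (K a b i (j+1)) hKN2 (K a b i j) (by omega)
    by_cases hp2 : q (K a b i (j+1)) = (i, j+1)
    · have hx2 : (q (K a b i (j+1))).1 = i := by rw [hp2]
      have hp : q (K a b i j) = (i, j) :=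
        (onPath_iff hq0 hqN hN hstep hIR).mpr (by omega)
      rw [LL_path ℓ hIR hp, LL_path ℓ hIR2 hp2, eK]
      exact hℓ _ (by omega)
    · have hab2 : ¬ (q (K a b i (j+1))).1 < i := by omega
      have hg := ((good ℓ hq0 hqN hN hstep hℓ (rank a b c d q i (j+1) + 1) i (j+1) (by omega)
        hIR2 hp2).2 hab2).1
      rw [show (j + 1 - 1 : ℤ) = j from by ring] at hg
      exact hg

include hq0 hqN hN hstep hℓ in
lemma sqAll {i j : ℤ} (h1 : a ≤ i) (h2 : i < c) (h3 : b ≤ j) (h4 : j < d) :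
    GrowthSq (LL a b c d q ℓ i j) (LL a b c d q ℓ i (j+1))
      (LL a b c d q ℓ (i+1) j) (LL a b c d q ℓ (i+1) (j+1)) := by
  have hIRbr : a ≤ i + 1 ∧ i + 1 ≤ c ∧ b ≤ j ∧ j ≤ d := ⟨by omega, by omega, h3, by omega⟩
  have hIRtl : a ≤ i ∧ i ≤ c ∧ b ≤ j + 1 ∧ j + 1 ≤ d := ⟨h1, by omega, by omega, by omega⟩
  have hKbr := K_cast hIRbr
  have eK : K a b i (j+1) = K a b (i+1) j := by unfold K; omega
  by_cases hcase : ¬ q (K a b (i+1) j) = (i+1, j) ∧ (q (K a b (i+1) j)).1 < i + 1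
  · have hg := ((good ℓ hq0 hqN hN hstep hℓ (rank a b c d q (i+1) j + 1) (i+1) j (by omega)
      hIRbr hcase.1).1 hcase.2).2.2
    rw [show (i + 1 - 1 : ℤ) = i from by ring] at hg
    exact hg
  · have hxge : i + 1 ≤ (q (K a b (i+1) j)).1 := by
      by_cases hp' : q (K a b (i+1) j) = (i+1, j)
      · rw [hp']
      · have : ¬ (q (K a b (i+1) j)).1 < i + 1 := fun h => hcase ⟨hp', h⟩
        omega
    have hnptl : ¬ q (K a b i (j+1)) = (i, j+1) := by
      intro h
      have : (q (K a b i (j+1))).1 = i := by rw [h]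
      rw [eK] at this
      omega
    have habtl : ¬ (q (K a b i (j+1))).1 < i := by rw [eK]; omega
    have hgs := ((good ℓ hq0 hqN hN hstep hℓ (rank a b c d q i (j+1) + 1) i (j+1) (by omega)
      hIRtl hnptl).2 habtl).2.2
    rw [show (j + 1 - 1 : ℤ) = j from by ring] at hgs
    exact hgs

include hq0 hqN hN hstep hℓ in
lemma uniq (L' : ℤ → ℤ → YoungDiagram)
    (c1 : ∀ i j, a ≤ i → i < c → b ≤ j → j ≤ d → OneBox (L' i j) (L' (i + 1) j))
    (c2 : ∀ i j, a ≤ i → i ≤ c → b ≤ j → j < d → OneBox (L' i j) (L' i (j + 1)))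
    (c3 : ∀ i j, a ≤ i → i < c → b ≤ j → j < d →
      GrowthSq (L' i j) (L' i (j + 1)) (L' (i + 1) j) (L' (i + 1) (j + 1)))
    (c4 : ∀ k, k ≤ N → L' (q k).1 (q k).2 = ℓ k)
    (c5 : ∀ i j, ¬ (a ≤ i ∧ i ≤ c ∧ b ≤ j ∧ j ≤ d) → L' i j = ⊥) :
    ∀ n : ℕ, ∀ i j : ℤ, rank a b c d q i j < n → L' i j = LL a b c d q ℓ i j := by
  intro n
  induction n with
  | zero => intro i j h; omega
  | succ n ih =>
    intro i j hr
    by_cases hIR : a ≤ i ∧ i ≤ c ∧ b ≤ j ∧ j ≤ d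
    · obtain ⟨h1, h2, h3, h4⟩ := id hIR
      have hK := K_cast hIR
      have hKN := K_le_N hN hIR
      by_cases hp : q (K a b i j) = (i, j)
      · have h4' := c4 (K a b i j) hKN
        rw [hp] at h4'
        rw [LL_path ℓ hIR hp]
        exact h4'
      · by_cases hbl : (q (K a b i j)).1 < i
        · obtain ⟨f2, f1, Kγ, Kα, Kβ, KβN, xγ, xα, xβ, rγ, rα, rβ⟩ :=
            belowFacts hq0 hqN hN hstep hIR hp hbl
          have eii : i - 1 + 1 = i := by ring
          have gγ := ih (i-1) j (by omega)
          have gα := ih (i-1) (j+1) (by omega)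
          have gβ := ih i (j+1) (by omega)
          have e1 := edgeV ℓ hq0 hqN hN hstep hℓ f2 (by omega) h3 (by omega)
          have e2 := edgeH ℓ hq0 hqN hN hstep hℓ f2 (by omega) (show b ≤ j + 1 by omega) f1
          rw [eii] at e2
          have cγv := c1 (i-1) j f2 (by omega) h3 h4
          rw [eii] at cγv
          have cvβ := c2 i j h1 h2 h3 (by omega)
          have cgs := c3 (i-1) j f2 (by omega) h3 (by omega)
          rw [eii] at cgs
          rw [gγ] at cγv cgs
          rw [gα] at cgs
          rw [gβ] at cvβ cgs
          rw [LL_below ℓ hq0 hqN hN hstep hIR hp hbl]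
          exact fill_unique e1 e2 ⟨cγv, cvβ, cgs⟩
        · obtain ⟨f2, f1, Kγ, Kδ, Kβ, KβN, xγ, xδ, xβ, rγ, rδ, rβ⟩ :=
            aboveFacts hq0 hqN hN hstep hIR hp hbl
          have ejj : j - 1 + 1 = j := by ring
          have gγ := ih i (j-1) (by omega)
          have gδ := ih (i+1) (j-1) (by omega)
          have gβ := ih (i+1) j (by omega)
          have e1 := edgeH ℓ hq0 hqN hN hstep hℓ h1 (by omega) f1 (show j - 1 ≤ d by omega)
          have e2 := edgeV ℓ hq0 hqN hN hstep hℓ (show a ≤ i + 1 by omega) f2 f1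
            (show j - 1 < d by omega)
          rw [ejj] at e2
          have cγv := c2 i (j-1) h1 h2 f1 (by omega)
          rw [ejj] at cγv
          have cvβ := c1 i j h1 (by omega) h3 h4
          have cgs := c3 i (j-1) h1 (by omega) f1 (by omega)
          rw [ejj] at cgs
          rw [gγ] at cγv cgs
          rw [gδ] at cgs
          rw [gβ] at cvβ cgs
          rw [LL_above ℓ hq0 hqN hN hstep hIR hp hbl]
          exact fill_unique e1 e2 ⟨cγv, cvβ, growthSq_swap cgs⟩
    · rw [c5 i j hIR, LL_out ℓ hIR]

end Global

end GDAux


/-- Let `D` be the rectangle in the directed grid graph `ℤ × ℤ` with bottom-left corner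
`(a,b)` and top-right corner `(c,d)`.  Given a labeling, by partitions, of the vertices
along a single monotone lattice path `q` from `(a,b)` to `(c,d)` satisfying the growth
condition (each edge adds a single box), there is a unique extension to a growth diagram
on the whole rectangle (normalized to be `⊥` outside the rectangle). -/
theorem growth_diagram_unique_extension
    (a b c d : ℤ) (hac : a ≤ c) (hbd : b ≤ d)
    (N : ℕ) (hN : (N : ℤ) = (c - a) + (d - b))
    (q : ℕ → ℤ × ℤ) (hq0 : q 0 = (a, b)) (hqN : q N = (c, d))
    (hstep : ∀ k, k < N →
      q (k + 1) = ((q k).1 + 1, (q k).2) ∨ q (k + 1) = ((q k).1, (q k).2 + 1))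
    (ℓ : ℕ → YoungDiagram) (hℓ : ∀ k, k < N → OneBox (ℓ k) (ℓ (k + 1))) :
    ∃! L : ℤ → ℤ → YoungDiagram,
      (∀ i j, a ≤ i → i < c → b ≤ j → j ≤ d → OneBox (L i j) (L (i + 1) j)) ∧
      (∀ i j, a ≤ i → i ≤ c → b ≤ j → j < d → OneBox (L i j) (L i (j + 1))) ∧
      (∀ i j, a ≤ i → i < c → b ≤ j → j < d →
        GrowthSq (L i j) (L i (j + 1)) (L (i + 1) j) (L (i + 1) (j + 1))) ∧
      (∀ k, k ≤ N → L (q k).1 (q k).2 = ℓ k) ∧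
      (∀ i j, ¬ (a ≤ i ∧ i ≤ c ∧ b ≤ j ∧ j ≤ d) → L i j = ⊥) := by
  refine ⟨GDAux.LL a b c d q ℓ, ⟨?_, ?_, ?_, ?_, ?_⟩, ?_⟩
  · intro i j h1 h2 h3 h4
    exact GDAux.edgeH ℓ hq0 hqN hN hstep hℓ h1 h2 h3 h4
  · intro i j h1 h2 h3 h4
    exact GDAux.edgeV ℓ hq0 hqN hN hstep hℓ h1 h2 h3 h4
  · intro i j h1 h2 h3 h4
    exact GDAux.sqAll ℓ hq0 hqN hN hstep hℓ h1 h2 h3 h4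
  · intro k hk
    exact GDAux.LL_qk ℓ hq0 hqN hN hstep hk
  · intro i j h
    exact GDAux.LL_out ℓ h
  · rintro L' ⟨c1, c2, c3, c4, c5⟩
    funext i j
    exact GDAux.uniq ℓ hq0 hqN hN hstep hℓ L' c1 c2 c3 c4 c5
      (GDAux.rank a b c d q i j + 1) i j (Nat.lt_succ_self _)
end

section
/- Tableau shuffling (jeu de taquin exchange) is an involution: if the pair of skew standard Young tableaux (S, T), where sh(T) extends sh(S), shuffles to (T̃, S̃), then (T̃, S̃) shuffles back to (S, T). -/
/-- A chain of partitions of length `m`, each step adding one box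
(the chain encoding of a skew standard Young tableau). -/
def IsChain' (m : ℕ) (S : ℕ → YoungDiagram) : Prop := ∀ i, i < m → OneBox (S i) (S (i + 1))

/-- A growth diagram on the rectangle `[0,t] × [0,s]`. -/
def IsGrowth (t s : ℕ) (L : ℕ → ℕ → YoungDiagram) : Prop :=
  (∀ i j, i < t → j ≤ s → OneBox (L i j) (L (i + 1) j)) ∧
  (∀ i j, i ≤ t → j < s → OneBox (L i j) (L i (j + 1))) ∧
  (∀ i j, i < t → j < s → GrowthSq (L i j) (L i (j + 1)) (L (i + 1) j) (L (i + 1) (j + 1)))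

/-- `(S, T)` shuffles to `(T', S')`: there is a growth diagram on `[0,t] × [0,s]` whose
left edge is the chain `S` (length `s`), top edge is `T` (length `t`), bottom edge is `T'`
and right edge is `S'`.  This encodes the jeu de taquin shuffle of a pair of skew
standard tableaux. -/
def ShufflesTo (s t : ℕ) (S T T' S' : ℕ → YoungDiagram) : Prop :=
  ∃ L, IsGrowth t s L ∧ (∀ j, j ≤ s → L 0 j = S j) ∧ (∀ i, i ≤ t → L i s = T i) ∧
    (∀ i, i ≤ t → L i 0 = T' i) ∧ (∀ j, j ≤ s → L t j = S' j)


/-- Tableau shuffling (jeu de taquin exchange) is an involution: if the pair `(S, T)` of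
skew standard Young tableaux (encoded as chains of partitions, with `sh(T)` extending
`sh(S)`) shuffles to `(T', S')`, then `(T', S')` shuffles back to `(S, T)`. -/
theorem shuffling_is_involution
    (s t : ℕ) (S T T' S' : ℕ → YoungDiagram)
    (hS : IsChain' s S) (hT : IsChain' t T)
    (h : ShufflesTo s t S T T' S') :
    ShufflesTo t s T' S' S T := by
  obtain ⟨L, ⟨hH, hV, hG⟩, hL, hTop, hBot, hR⟩ := h
  refine ⟨fun i j => L j i, ⟨fun i j hi hj => hV j i hj hi,
    fun i j hi hj => hH j i hj hi, fun i j hi hj hne => ?_⟩,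
    fun j hj => hBot j hj, fun i hi => hR i hi, fun i hi => hL i hi,
    fun j hj => hTop j hj⟩
  exact (hG j i hj hi hne).symm
end
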